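/- Let d ≥ 1, R = d², m, n ≥ 1, and let P_0 > ... > P_d and Q_0 > ... > Q_d be strictly descending sequences of integers. For i, j ∈ {1,...,d}, let W_i ∈ ℝ^{m×n} have all entries of absolute value at most 2^{P_{i-1}-P_i} - 1 and let X_j ∈ ℝ^{n} have all entries of absolute value at most 2^{Q_{j-1}-Q_j} - 1. Suppose W = Σ_{i=1}^{d} W_i·2^{P_i} + R_W and X = Σ_{j=1}^{d} X_j·2^{Q_j} + R_X, where every entry of R_W has absolute value less than 2^{P_d} and every entry of R_X has absolute value less than 2^{Q_d}. Let γ: {1,...,R} → {1,...,d}×{1,...,d} be a bijection such that i ≤ j implies P_{γ_i(1)} + Q_{γ_i(2)} ≥ P_{γ_j(1)} + Q_{γ_j(2)}, and for r ∈ {1,...,R} define Ω_r = Σ_{i=1}^{r} W_{γ_i(1)}·X_{γ_i(2)}·2^{P_{γ_i(1)} + Q_{γ_i(2)}}. Then for every r ∈ {1,...,R}, every entry of WX - Ω_r has absolute value less than δ(r) := n·(2^{P_0+Q_d} + 2^{P_d+Q_0} + 2^{P_d+Q_d}) + n·Σ_{i=r+1}^{R} 2^{P_{γ_i(1)-1}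 + Q_{γ_i(2)-1}}, and δ(r) is non-increasing in r. -/

import Mathlib

private lemma two_zpow_pos' (z : ℤ) : (0:ℝ) < 2 ^ z := zpow_pos (by norm_num) z

private lemma zpow_toNat_eq' {x y : ℤ} (h : y ≤ x) :
    (2:ℝ) ^ (x - y).toNat = 2 ^ (x - y) := by
  rw [← zpow_natCast, Int.toNat_of_nonneg (sub_nonneg.2 h)]

private lemma tele_bound (d : ℕ) (P : ℕ → ℤ)
    (hP : ∀ i, i < d → P (i + 1) < P i)
    (c : ℕ → ℝ)
    (hc : ∀ i ∈ Finset.Icc 1 d, |c i| ≤ 2 ^ (P (i - 1) - P i).toNat - 1) :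
    |∑ i ∈ Finset.Icc 1 d, (2:ℝ) ^ P i * c i| ≤ 2 ^ P 0 - 2 ^ P d := by
  have h1 : ∀ i ∈ Finset.Icc 1 d, |(2:ℝ) ^ P i * c i| ≤ 2 ^ P (i-1) - 2 ^ P i := by
    intro i hi
    have hi' := Finset.mem_Icc.mp hi
    have hlt : P i ≤ P (i-1) := by
      have h := hP (i-1) (by omega)
      rw [show i - 1 + 1 = i by omega] at h
      exact h.le
    have h2 : (2:ℝ) ^ P i * (2 ^ (P (i-1) - P i).toNat - 1) = 2 ^ P (i-1) - 2 ^ P i := by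
      rw [zpow_toNat_eq' hlt, mul_sub, ← zpow_add₀ (two_ne_zero), mul_one]
      congr 2
      ring
    calc |(2:ℝ) ^ P i * c i| = 2 ^ P i * |c i| := by
          rw [abs_mul, abs_of_pos (two_zpow_pos' _)]
      _ ≤ 2 ^ P i * (2 ^ (P (i-1) - P i).toNat - 1) :=
          mul_le_mul_of_nonneg_left (hc i hi) (two_zpow_pos' _).le
      _ = _ := h2
  calc |∑ i ∈ Finset.Icc 1 d, (2:ℝ) ^ P i * c i|
      ≤ ∑ i ∈ Finset.Icc 1 d, |(2:ℝ) ^ P i * c i| := Finset.abs_sum_le_sum_abs _ _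
    _ ≤ ∑ i ∈ Finset.Icc 1 d, ((2:ℝ) ^ P (i-1) - 2 ^ P i) := Finset.sum_le_sum h1
    _ = 2 ^ P 0 - 2 ^ P d := by
        rw [show Finset.Icc 1 d = Finset.Ico 1 (d+1) by rw [Finset.Ico_add_one_right_eq_Icc]]
        rw [Finset.sum_Ico_eq_sum_range]
        simp only [Nat.add_sub_cancel]
        have h3 : ∀ k ∈ Finset.range d,
            (2:ℝ) ^ P (1 + k - 1) - 2 ^ P (1 + k) = 2 ^ P k - 2 ^ P (k+1) := by
          intro k _
          rw [show 1 + k - 1 = k by omega, show 1 + k = k + 1 by omega]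
        rw [Finset.sum_congr rfl h3]
        exact Finset.sum_range_sub' (fun k => (2:ℝ) ^ P k) d

private lemma entry_bound (d n R : ℕ) (hn : 1 ≤ n)
    (P Q : ℕ → ℤ)
    (hP : ∀ i, i < d → P (i + 1) < P i)
    (hQ : ∀ i, i < d → Q (i + 1) < Q i)
    (w x : ℕ → Fin n → ℝ)
    (hw : ∀ i ∈ Finset.Icc 1 d, ∀ b, |w i b| ≤ 2 ^ (P (i - 1) - P i).toNat - 1)
    (hx : ∀ j ∈ Finset.Icc 1 d, ∀ b, |x j b| ≤ 2 ^ (Q (j - 1) - Q j).toNat - 1)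
    (rw rx : Fin n → ℝ)
    (hrw : ∀ b, |rw b| < 2 ^ P d) (hrx : ∀ b, |rx b| < 2 ^ Q d)
    (γ : ℕ → ℕ × ℕ)
    (hγ : Set.BijOn γ ↑(Finset.Icc 1 R) ↑(Finset.Icc 1 d ×ˢ Finset.Icc 1 d))
    (r : ℕ) (hr1 : 1 ≤ r) (hrR : r ≤ R) :
    |(∑ b, ((∑ i ∈ Finset.Icc 1 d, (2:ℝ) ^ P i * w i b) + rw b) *
        ((∑ j ∈ Finset.Icc 1 d, (2:ℝ) ^ Q j * x j b) + rx b))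
      - ∑ i ∈ Finset.Icc 1 r,
          (2:ℝ) ^ (P (γ i).1 + Q (γ i).2) * ∑ b, w (γ i).1 b * x (γ i).2 b|
    < n * ((2:ℝ) ^ (P 0 + Q d) + 2 ^ (P d + Q 0) + 2 ^ (P d + Q d))
      + n * ∑ i ∈ Finset.Icc (r + 1) R,
          (2:ℝ) ^ (P ((γ i).1 - 1) + Q ((γ i).2 - 1)) := by
  set A : Fin n → ℝ := fun b => ∑ i ∈ Finset.Icc 1 d, (2:ℝ) ^ P i * w i b with hA
  set B : Fin n → ℝ := fun b => ∑ j ∈ Finset.Icc 1 d, (2:ℝ) ^ Q j * x j b with hB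
  set T : ℕ × ℕ → ℝ :=
    fun p => (2:ℝ) ^ (P p.1 + Q p.2) * ∑ b, w p.1 b * x p.2 b with hT
  -- expand the product sum
  have expand : ∑ b, (A b + rw b) * (B b + rx b)
      = (∑ b, A b * B b) + ((∑ b, A b * rx b) + ((∑ b, rw b * B b) + ∑ b, rw b * rx b)) := by
    rw [← Finset.sum_add_distrib, ← Finset.sum_add_distrib, ← Finset.sum_add_distrib]
    exact Finset.sum_congr rfl fun b _ => by ring
  have hAB : (∑ b, A b * B b) = ∑ p ∈ Finset.Icc 1 d ×ˢ Finset.Icc 1 d, T p := by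
    calc ∑ b, A b * B b
        = ∑ b, ∑ i ∈ Finset.Icc 1 d, ∑ j ∈ Finset.Icc 1 d,
            ((2:ℝ) ^ P i * w i b) * ((2:ℝ) ^ Q j * x j b) :=
          Finset.sum_congr rfl fun b _ => Finset.sum_mul_sum _ _ _ _
      _ = ∑ i ∈ Finset.Icc 1 d, ∑ j ∈ Finset.Icc 1 d, ∑ b,
            ((2:ℝ) ^ P i * w i b) * ((2:ℝ) ^ Q j * x j b) := by
          rw [Finset.sum_comm]
          exact Finset.sum_congr rfl fun i _ => Finset.sum_comm
      _ = ∑ i ∈ Finset.Icc 1 d, ∑ j ∈ Finset.Icc 1 d, T (i, j) := by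
          refine Finset.sum_congr rfl fun i _ => Finset.sum_congr rfl fun j _ => ?_
          simp only [hT]
          rw [zpow_add₀ (two_ne_zero), Finset.mul_sum]
          exact Finset.sum_congr rfl fun b _ => by ring
      _ = ∑ p ∈ Finset.Icc 1 d ×ˢ Finset.Icc 1 d, T p := (Finset.sum_product _ _ _).symm
  have hsum : (∑ i ∈ Finset.Icc 1 R, T (γ i))
      = ∑ p ∈ Finset.Icc 1 d ×ˢ Finset.Icc 1 d, T p := by
    refine (Finset.sum_bij (fun i _ => γ i) ?_ ?_ ?_ ?_)
    · intro i hi; exact hγ.mapsTo hi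
    · intro a₁ h₁ a₂ h₂ h; exact hγ.injOn h₁ h₂ h
    · intro p hp
      obtain ⟨i, hi, hip⟩ := hγ.surjOn hp
      exact ⟨i, hi, hip⟩
    · intro i _; rfl
  have hun : Finset.Icc 1 R = Finset.Icc 1 r ∪ Finset.Icc (r+1) R := by
    ext z; simp only [Finset.mem_Icc, Finset.mem_union]; omega
  have hdis : Disjoint (Finset.Icc 1 r) (Finset.Icc (r+1) R) := by
    rw [Finset.disjoint_left]
    intro z hz hz'
    simp only [Finset.mem_Icc] at hz hz'
    omega
  have hsplit : (∑ i ∈ Finset.Icc 1 R, T (γ i))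
      = (∑ i ∈ Finset.Icc 1 r, T (γ i)) + ∑ i ∈ Finset.Icc (r+1) R, T (γ i) := by
    rw [hun, Finset.sum_union hdis]
  have heq : (∑ b, (A b + rw b) * (B b + rx b))
      - (∑ i ∈ Finset.Icc 1 r, T (γ i))
      = (∑ i ∈ Finset.Icc (r+1) R, T (γ i))
        + ((∑ b, A b * rx b) + ((∑ b, rw b * B b) + ∑ b, rw b * rx b)) := by
    rw [expand, hAB, ← hsum, hsplit]; ring
  rw [show (∑ i ∈ Finset.Icc 1 r,
      (2:ℝ) ^ (P (γ i).1 + Q (γ i).2) * ∑ b, w (γ i).1 b * x (γ i).2 b)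
      = ∑ i ∈ Finset.Icc 1 r, T (γ i) from rfl, heq]
  -- bounds
  have hnR : (1:ℝ) ≤ (n:ℝ) := by exact_mod_cast hn
  have hAb : ∀ b, |A b| ≤ 2 ^ P 0 - 2 ^ P d :=
    fun b => tele_bound d P hP (fun i => w i b) (fun i hi => hw i hi b)
  have hBb : ∀ b, |B b| ≤ 2 ^ Q 0 - 2 ^ Q d :=
    fun b => tele_bound d Q hQ (fun j => x j b) (fun j hj => hx j hj b)
  have hcard : (Finset.univ : Finset (Fin n)).card = n := by simp
  have hE1 : |∑ b, A b * rx b| ≤ n * 2 ^ (P 0 + Q d) := by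
    calc |∑ b, A b * rx b| ≤ ∑ b, |A b * rx b| := Finset.abs_sum_le_sum_abs _ _
      _ ≤ ∑ _b : Fin n, (2:ℝ) ^ P 0 * 2 ^ Q d := by
          refine Finset.sum_le_sum fun b _ => ?_
          rw [abs_mul]
          exact mul_le_mul ((hAb b).trans (by linarith [two_zpow_pos' (P d)]))
            (hrx b).le (abs_nonneg _) (two_zpow_pos' _).le
      _ = n * 2 ^ (P 0 + Q d) := by
          rw [Finset.sum_const, hcard, nsmul_eq_mul, zpow_add₀ (two_ne_zero)]
  have hE2 : |∑ b, rw b * B b| ≤ n * 2 ^ (P d + Q 0) := by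
    calc |∑ b, rw b * B b| ≤ ∑ b, |rw b * B b| := Finset.abs_sum_le_sum_abs _ _
      _ ≤ ∑ _b : Fin n, (2:ℝ) ^ P d * 2 ^ Q 0 := by
          refine Finset.sum_le_sum fun b _ => ?_
          rw [abs_mul]
          exact mul_le_mul (hrw b).le ((hBb b).trans (by linarith [two_zpow_pos' (Q d)]))
            (abs_nonneg _) (two_zpow_pos' _).le
      _ = n * 2 ^ (P d + Q 0) := by
          rw [Finset.sum_const, hcard, nsmul_eq_mul, zpow_add₀ (two_ne_zero)]
  have hne : (Finset.univ : Finset (Fin n)).Nonempty := ⟨⟨0, hn⟩, Finset.mem_univ _⟩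
  have hE3 : |∑ b, rw b * rx b| < n * 2 ^ (P d + Q d) := by
    calc |∑ b, rw b * rx b| ≤ ∑ b, |rw b * rx b| := Finset.abs_sum_le_sum_abs _ _
      _ < ∑ _b : Fin n, (2:ℝ) ^ P d * 2 ^ Q d := by
          refine Finset.sum_lt_sum_of_nonempty hne fun b _ => ?_
          rw [abs_mul]
          exact mul_lt_mul'' (hrw b) (hrx b) (abs_nonneg _) (abs_nonneg _)
      _ = n * 2 ^ (P d + Q d) := by
          rw [Finset.sum_const, hcard, nsmul_eq_mul, zpow_add₀ (two_ne_zero)]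
  have hTail : |∑ i ∈ Finset.Icc (r+1) R, T (γ i)|
      ≤ n * ∑ i ∈ Finset.Icc (r+1) R, (2:ℝ) ^ (P ((γ i).1 - 1) + Q ((γ i).2 - 1)) := by
    rw [Finset.mul_sum]
    calc |∑ i ∈ Finset.Icc (r+1) R, T (γ i)|
        ≤ ∑ i ∈ Finset.Icc (r+1) R, |T (γ i)| := Finset.abs_sum_le_sum_abs _ _
      _ ≤ ∑ i ∈ Finset.Icc (r+1) R,
            (n:ℝ) * 2 ^ (P ((γ i).1 - 1) + Q ((γ i).2 - 1)) := by
          refine Finset.sum_le_sum fun i hi => ?_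
          have hi' := Finset.mem_Icc.mp hi
          have hiR : i ∈ (Finset.Icc 1 R : Finset ℕ) := Finset.mem_Icc.2 (by omega)
          have hp : γ i ∈ (Finset.Icc 1 d ×ˢ Finset.Icc 1 d : Finset (ℕ × ℕ)) :=
            hγ.mapsTo hiR
          rw [Finset.mem_product, Finset.mem_Icc, Finset.mem_Icc] at hp
          obtain ⟨⟨hp11, hp12⟩, hp21, hp22⟩ := hp
          set p := γ i
          have hP1 : P p.1 ≤ P (p.1 - 1) := by
            have h := hP (p.1 - 1) (by omega)
            rw [show p.1 - 1 + 1 = p.1 by omega] at h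
            exact h.le
          have hQ1 : Q p.2 ≤ Q (p.2 - 1) := by
            have h := hQ (p.2 - 1) (by omega)
            rw [show p.2 - 1 + 1 = p.2 by omega] at h
            exact h.le
          have h2a : (1:ℝ) ≤ 2 ^ (P (p.1 - 1) - P p.1).toNat := one_le_pow₀ (by norm_num)
          have h2b : (1:ℝ) ≤ 2 ^ (Q (p.2 - 1) - Q p.2).toNat := one_le_pow₀ (by norm_num)
          have hstep : |∑ b, w p.1 b * x p.2 b|
              ≤ (n:ℝ) * (2 ^ (P (p.1 - 1) - P p.1).toNat * 2 ^ (Q (p.2 - 1) - Q p.2).toNat) := by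
            calc |∑ b, w p.1 b * x p.2 b| ≤ ∑ b, |w p.1 b * x p.2 b| :=
                Finset.abs_sum_le_sum_abs _ _
              _ ≤ ∑ _b : Fin n, ((2:ℝ) ^ (P (p.1 - 1) - P p.1).toNat - 1)
                    * (2 ^ (Q (p.2 - 1) - Q p.2).toNat - 1) := by
                  refine Finset.sum_le_sum fun b _ => ?_
                  rw [abs_mul]
                  exact mul_le_mul (hw p.1 (Finset.mem_Icc.2 ⟨hp11, hp12⟩) b)
                    (hx p.2 (Finset.mem_Icc.2 ⟨hp21, hp22⟩) b) (abs_nonneg _)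
                    (by linarith)
              _ ≤ ∑ _b : Fin n, (2:ℝ) ^ (P (p.1 - 1) - P p.1).toNat
                    * 2 ^ (Q (p.2 - 1) - Q p.2).toNat := by
                  refine Finset.sum_le_sum fun b _ => ?_
                  exact mul_le_mul (by linarith) (by linarith) (by linarith)
                    (by positivity)
              _ = (n:ℝ) * (2 ^ (P (p.1 - 1) - P p.1).toNat
                    * 2 ^ (Q (p.2 - 1) - Q p.2).toNat) := by
                  rw [Finset.sum_const, hcard, nsmul_eq_mul]
          calc |T p| = 2 ^ (P p.1 + Q p.2) * |∑ b, w p.1 b * x p.2 b| := by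
                rw [hT, abs_mul, abs_of_pos (two_zpow_pos' _)]
            _ ≤ 2 ^ (P p.1 + Q p.2) * ((n:ℝ)
                  * (2 ^ (P (p.1 - 1) - P p.1).toNat * 2 ^ (Q (p.2 - 1) - Q p.2).toNat)) :=
                mul_le_mul_of_nonneg_left hstep (two_zpow_pos' _).le
            _ = (n:ℝ) * 2 ^ (P (p.1 - 1) + Q (p.2 - 1)) := by
                rw [zpow_toNat_eq' hP1, zpow_toNat_eq' hQ1]
                rw [show (2:ℝ) ^ (P p.1 + Q p.2) * ((n:ℝ)
                    * (2 ^ (P (p.1-1) - P p.1) * 2 ^ (Q (p.2-1) - Q p.2)))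
                    = (n:ℝ) * ((2:ℝ) ^ (P p.1 + Q p.2)
                    * (2 ^ (P (p.1-1) - P p.1) * 2 ^ (Q (p.2-1) - Q p.2))) from by ring]
                congr 1
                rw [← zpow_add₀ (two_ne_zero : (2:ℝ) ≠ 0),
                  ← zpow_add₀ (two_ne_zero : (2:ℝ) ≠ 0)]
                congr 1
                ring
  calc |(∑ i ∈ Finset.Icc (r+1) R, T (γ i))
        + ((∑ b, A b * rx b) + ((∑ b, rw b * B b) + ∑ b, rw b * rx b))|
      ≤ |∑ i ∈ Finset.Icc (r+1) R, T (γ i)|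
        + (|∑ b, A b * rx b| + (|∑ b, rw b * B b| + |∑ b, rw b * rx b|)) := by
        refine (abs_add_le _ _).trans (add_le_add le_rfl ?_)
        refine (abs_add_le _ _).trans (add_le_add le_rfl ?_)
        exact abs_add_le _ _
    _ < (n * ∑ i ∈ Finset.Icc (r+1) R, (2:ℝ) ^ (P ((γ i).1 - 1) + Q ((γ i).2 - 1)))
        + (n * 2 ^ (P 0 + Q d) + (n * 2 ^ (P d + Q 0) + n * 2 ^ (P d + Q d))) :=
        add_lt_add_of_le_of_lt hTail
          (add_lt_add_of_le_of_lt hE1 (add_lt_add_of_le_of_lt hE2 hE3))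
    _ = n * ((2:ℝ) ^ (P 0 + Q d) + 2 ^ (P d + Q 0) + 2 ^ (P d + Q d))
        + n * ∑ i ∈ Finset.Icc (r+1) R, (2:ℝ) ^ (P ((γ i).1 - 1) + Q ((γ i).2 - 1)) := by
        ring

/-- Theorem 1, precision requirement: for the layered computation of
`f(X) = W X`, every entry of `W X - Ω_r` is bounded by `δ(r)`, and `δ` is
non-increasing on `{1, ..., R}` with `R = d²`. -/
theorem layered_linear_precision (d m n : ℕ) (hd : 1 ≤ d) (hm : 1 ≤ m) (hn : 1 ≤ n)
    (R : ℕ) (hR : R = d ^ 2)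
    (P Q : ℕ → ℤ)
    (hP : ∀ i, i < d → P (i + 1) < P i)
    (hQ : ∀ i, i < d → Q (i + 1) < Q i)
    (Wc : ℕ → Matrix (Fin m) (Fin n) ℝ) (Xc : ℕ → Fin n → ℝ)
    (hWc : ∀ i ∈ Finset.Icc 1 d, ∀ a b,
      |Wc i a b| ≤ 2 ^ (P (i - 1) - P i).toNat - 1)
    (hXc : ∀ j ∈ Finset.Icc 1 d, ∀ b,
      |Xc j b| ≤ 2 ^ (Q (j - 1) - Q j).toNat - 1)
    (W : Matrix (Fin m) (Fin n) ℝ) (X : Fin n → ℝ)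
    (RW : Matrix (Fin m) (Fin n) ℝ) (RX : Fin n → ℝ)
    (hW : W = ∑ i ∈ Finset.Icc 1 d, (2 : ℝ) ^ P i • Wc i + RW)
    (hX : X = ∑ j ∈ Finset.Icc 1 d, (2 : ℝ) ^ Q j • Xc j + RX)
    (hRW : ∀ a b, |RW a b| < 2 ^ P d)
    (hRX : ∀ b, |RX b| < 2 ^ Q d)
    (γ : ℕ → ℕ × ℕ)
    (hγ : Set.BijOn γ ↑(Finset.Icc 1 R) ↑(Finset.Icc 1 d ×ˢ Finset.Icc 1 d))
    (hγmono : ∀ i ∈ Finset.Icc 1 R, ∀ j ∈ Finset.Icc 1 R, i ≤ j →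
      P (γ j).1 + Q (γ j).2 ≤ P (γ i).1 + Q (γ i).2)
    (Ω : ℕ → Fin m → ℝ)
    (hΩ : ∀ r, Ω r = ∑ i ∈ Finset.Icc 1 r,
      (2 : ℝ) ^ (P (γ i).1 + Q (γ i).2) • (Wc (γ i).1).mulVec (Xc (γ i).2))
    (δ : ℕ → ℝ)
    (hδ : ∀ r, δ r =
      n * ((2 : ℝ) ^ (P 0 + Q d) + 2 ^ (P d + Q 0) + 2 ^ (P d + Q d))
        + n * ∑ i ∈ Finset.Icc (r + 1) R,
            (2 : ℝ) ^ (P ((γ i).1 - 1) + Q ((γ i).2 - 1))) :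
    (∀ r ∈ Finset.Icc 1 R, ∀ a, |(W.mulVec X - Ω r) a| < δ r) ∧
    (∀ r ∈ Finset.Icc 1 R, ∀ s ∈ Finset.Icc 1 R, r ≤ s → δ s ≤ δ r) := by
  constructor
  · intro r hr a
    have hr' := Finset.mem_Icc.mp hr
    have hent : (W.mulVec X - Ω r) a
        = (∑ b, ((∑ i ∈ Finset.Icc 1 d, (2:ℝ) ^ P i * Wc i a b) + RW a b) *
            ((∑ j ∈ Finset.Icc 1 d, (2:ℝ) ^ Q j * Xc j b) + RX b))
          - ∑ i ∈ Finset.Icc 1 r,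
              (2:ℝ) ^ (P (γ i).1 + Q (γ i).2) * ∑ b, Wc (γ i).1 a b * Xc (γ i).2 b := by
      have hΩa : Ω r a = ∑ i ∈ Finset.Icc 1 r,
          (2:ℝ) ^ (P (γ i).1 + Q (γ i).2) * ∑ b, Wc (γ i).1 a b * Xc (γ i).2 b := by
        rw [hΩ r]
        simp [Finset.sum_apply, Pi.smul_apply, Matrix.mulVec, dotProduct,
          smul_eq_mul]
      have hWab : ∀ b, W a b = (∑ i ∈ Finset.Icc 1 d, (2:ℝ) ^ P i * Wc i a b) + RW a b := by
        intro b
        rw [hW]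
        simp [Matrix.add_apply, Matrix.sum_apply, Matrix.smul_apply, smul_eq_mul]
      have hXb : ∀ b, X b = (∑ j ∈ Finset.Icc 1 d, (2:ℝ) ^ Q j * Xc j b) + RX b := by
        intro b
        rw [hX]
        simp [Finset.sum_apply, Pi.add_apply, Pi.smul_apply, smul_eq_mul]
      rw [Pi.sub_apply, hΩa]
      congr 1
      rw [Matrix.mulVec]
      simp only [dotProduct]
      exact Finset.sum_congr rfl fun b _ => by rw [hWab b, hXb b]
    rw [hent, hδ r]
    exact entry_bound d n R hn P Q hP hQ (fun i => Wc i a) Xc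
      (fun i hi b => hWc i hi a b) (fun j hj b => hXc j hj b)
      (RW a) RX (fun b => hRW a b) hRX γ hγ r hr'.1 hr'.2
  · intro r hr s hs hrs
    rw [hδ r, hδ s]
    have hsub : Finset.Icc (s+1) R ⊆ Finset.Icc (r+1) R :=
      Finset.Icc_subset_Icc_left (by omega)
    have hmono : (∑ i ∈ Finset.Icc (s+1) R, (2:ℝ) ^ (P ((γ i).1 - 1) + Q ((γ i).2 - 1)))
        ≤ ∑ i ∈ Finset.Icc (r+1) R, (2:ℝ) ^ (P ((γ i).1 - 1) + Q ((γ i).2 - 1)) :=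
      Finset.sum_le_sum_of_subset_of_nonneg hsub fun i _ _ => (two_zpow_pos' _).le
    exact add_le_add le_rfl (mul_le_mul_of_nonneg_left hmono (Nat.cast_nonneg n))
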